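/- In a mixed-goods instance with one indivisible good g1 valued 1 by both agents and two divisible goods d1, d2 with u1(d1)=1/2, u1(d2)=0, u2(d1)=0, u2(d2)=1/2, no complete allocation is simultaneously EFM and Pareto-optimal. -/
import Mathlib


open Finset

def mval {G H : Type*} (uI : G → ℝ) (uD : H → ℝ) (D : Finset H)
    (B : Finset G × (H → ℝ)) : ℝ :=
  (∑ g ∈ B.1, uI g) + ∑ h ∈ D, B.2 h * uD h

def OnlyIndiv {G H : Type*} (D : Finset H) (B : Finset G × (H → ℝ)) : Prop :=
  ∀ h ∈ D, B.2 h = 0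

def EFMpair {G H : Type*} [DecidableEq G] (uI : G → ℝ) (uD : H → ℝ) (D : Finset H)
    (Bi Bj : Finset G × (H → ℝ)) : Prop :=
  (OnlyIndiv D Bj →
    (mval uI uD D Bj ≤ mval uI uD D Bi ∨
      ∃ g ∈ Bj.1, mval uI uD D (Bj.1.erase g, Bj.2) ≤ mval uI uD D Bi)) ∧
  (¬ OnlyIndiv D Bj → mval uI uD D Bj ≤ mval uI uD D Bi)

/-- Complete allocation of mixed goods to two agents: the indivisible goods are
partitioned and every divisible good is fully allocated. -/
def Complete2 {G H : Type*} [DecidableEq G] (M : Finset G) (D : Finset H)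
    (A1 A2 : Finset G × (H → ℝ)) : Prop :=
  A1.1 ∪ A2.1 = M ∧ Disjoint A1.1 A2.1 ∧
  (∀ h ∈ D, 0 ≤ A1.2 h) ∧ (∀ h ∈ D, 0 ≤ A2.2 h) ∧ (∀ h ∈ D, A1.2 h + A2.2 h = 1)

/-- In the mixed-goods instance with one indivisible good `g1` valued `1`
by both agents and divisible goods `d1, d2` with `u1 = (1/2, 0)` and `u2 = (0, 1/2)`,
no complete allocation is simultaneously EFM and Pareto-optimal. -/
theorem stmt_18 :
    let M : Finset (Fin 1) := Finset.univ
    let D : Finset (Fin 2) := Finset.univ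
    let uI1 : Fin 1 → ℝ := fun _ => 1
    let uI2 : Fin 1 → ℝ := fun _ => 1
    let uD1 : Fin 2 → ℝ := ![1 / 2, 0]
    let uD2 : Fin 2 → ℝ := ![0, 1 / 2]
    ∀ A1 A2 : Finset (Fin 1) × (Fin 2 → ℝ), Complete2 M D A1 A2 →
      ¬ (EFMpair uI1 uD1 D A1 A2 ∧ EFMpair uI2 uD2 D A2 A1 ∧
        ∀ B1 B2 : Finset (Fin 1) × (Fin 2 → ℝ), Complete2 M D B1 B2 →
          ¬ (mval uI1 uD1 D A1 ≤ mval uI1 uD1 D B1 ∧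
             mval uI2 uD2 D A2 ≤ mval uI2 uD2 D B2 ∧
             (mval uI1 uD1 D A1 < mval uI1 uD1 D B1 ∨
              mval uI2 uD2 D A2 < mval uI2 uD2 D B2))) := by
  intro M D uI1 uI2 uD1 uD2 A1 A2 hC
  rintro ⟨hE1, hE2, hPO⟩
  obtain ⟨hU, hdisj, h1nn, h2nn, hsum⟩ := hC
  have hx : A1.2 0 + A2.2 0 = 1 := hsum 0 (Finset.mem_univ _)
  have hy : A1.2 1 + A2.2 1 = 1 := hsum 1 (Finset.mem_univ _)
  have h1x : 0 ≤ A1.2 0 := h1nn 0 (Finset.mem_univ _)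
  have h2x : 0 ≤ A2.2 0 := h2nn 0 (Finset.mem_univ _)
  have h1y : 0 ≤ A1.2 1 := h1nn 1 (Finset.mem_univ _)
  have h2y : 0 ≤ A2.2 1 := h2nn 1 (Finset.mem_univ _)
  have hx1 : A1.2 0 = 1 := by
    by_contra hne
    have hlt : A1.2 0 < 1 := lt_of_le_of_ne (by linarith) hne
    refine hPO (A1.1, ![1, A1.2 1]) (A2.1, ![0, A2.2 1])
      ⟨hU, hdisj, ?_, ?_, ?_⟩ ⟨?_, ?_, Or.inl ?_⟩
    · intro h _
      fin_cases h
      · norm_num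
      · simpa using h1y
    · intro h _
      fin_cases h
      · norm_num
      · simpa using h2y
    · intro h _
      fin_cases h
      · norm_num
      · simpa using hy
    · simp [mval, D, uD1, Fin.sum_univ_two]; linarith
    · simp [mval, D, uD2, Fin.sum_univ_two]
    · simp [mval, D, uD1, Fin.sum_univ_two]; linarith
  have hy0 : A1.2 1 = 0 := by
    by_contra hne
    have hlt : 0 < A1.2 1 := lt_of_le_of_ne h1y (Ne.symm hne)
    refine hPO (A1.1, ![A1.2 0, 0]) (A2.1, ![A2.2 0, 1])
      ⟨hU, hdisj, ?_, ?_, ?_⟩ ⟨?_, ?_, Or.inr ?_⟩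
    · intro h _
      fin_cases h
      · simpa using h1x
      · norm_num
    · intro h _
      fin_cases h
      · simpa using h2x
      · norm_num
    · intro h _
      fin_cases h
      · simpa using hx
      · norm_num
    · simp [mval, D, uD1, Fin.sum_univ_two]
    · simp [mval, D, uD2, Fin.sum_univ_two]; linarith
    · simp [mval, D, uD2, Fin.sum_univ_two]; linarith
  have h2x0 : A2.2 0 = 0 := by linarith
  have h2y1 : A2.2 1 = 1 := by linarith
  have h0mem : (0 : Fin 1) ∈ A1.1 ∪ A2.1 := by rw [hU]; simp [M]
  rcases Finset.mem_union.1 h0mem with h0 | h0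
  · have hA1 : A1.1 = {0} := by
      ext a
      rw [Subsingleton.elim a 0]
      simp [h0]
    have hA2 : A2.1 = ∅ := by
      rw [Finset.eq_empty_iff_forall_notMem]
      intro a ha
      rw [Subsingleton.elim a 0] at ha
      exact Finset.disjoint_left.1 hdisj h0 ha
    have hni : ¬ OnlyIndiv D A1 := by
      intro h; have := h 0 (Finset.mem_univ _); rw [hx1] at this; norm_num at this
    have := hE2.2 hni
    simp [mval, D, uD2, Fin.sum_univ_two, hA1, hA2, hx1, hy0, h2x0, h2y1] at this
    linarith
  · have hA2 : A2.1 = {0} := by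
      ext a
      rw [Subsingleton.elim a 0]
      simp [h0]
    have hA1 : A1.1 = ∅ := by
      rw [Finset.eq_empty_iff_forall_notMem]
      intro a ha
      rw [Subsingleton.elim a 0] at ha
      exact Finset.disjoint_right.1 hdisj h0 ha
    have hni : ¬ OnlyIndiv D A2 := by
      intro h; have := h 1 (Finset.mem_univ _); rw [h2y1] at this; norm_num at this
    have := hE1.2 hni
    simp [mval, D, uD1, Fin.sum_univ_two, hA1, hA2, hx1, hy0, h2x0, h2y1] at this
    linarith
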